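/- Let K₀ > 0 and F₀ > 0 with a₀ := (F₀/K₀)^{1/3}, and suppose λ : [0,∞) → ℝ is differentiable, positive, satisfies λ(0) = 1 and λ'(t) = -(2/3)·K₀ + (2/3)·F₀·λ(t)⁻³ for all t ≥ 0. If a₀ > 1 then λ is nondecreasing and λ(t) < a₀ for all t ≥ 0; if a₀ < 1 then λ is nonincreasing and λ(t) > a₀ for all t ≥ 0; and if a₀ = 1 then λ(t) = 1 for all t ≥ 0. -/

import Mathlib

open Set

/-- Invariance from above: if `lam 0 ≤ a₀`, then `lam t ≤ a₀` for all `t ≥ 0`. -/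
private lemma stmt15_le (K₀ F₀ a₀ : ℝ) (hK₀ : 0 < K₀) (ha₀ : 0 < a₀)
    (hF : F₀ = K₀ * a₀ ^ 3)
    (lam : ℝ → ℝ) (hpos : ∀ t ∈ Set.Ici (0:ℝ), 0 < lam t)
    (hode : ∀ t ∈ Set.Ici (0:ℝ),
      HasDerivWithinAt lam (-(2/3) * K₀ + (2/3) * F₀ * ((lam t)^3)⁻¹) (Set.Ici 0) t)
    (h0 : lam 0 ≤ a₀) : ∀ t ∈ Set.Ici (0:ℝ), lam t ≤ a₀ := by
  have hcont : ContinuousOn lam (Set.Ici 0) := fun t ht => (hode t ht).continuousWithinAt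
  intro t₁ ht₁
  by_contra hgt
  push_neg at hgt
  set S : Set ℝ := Set.Icc 0 t₁ ∩ lam ⁻¹' Set.Iic a₀ with hS
  have hSc : IsClosed S :=
    (hcont.mono Set.Icc_subset_Ici_self).preimage_isClosed_of_isClosed isClosed_Icc isClosed_Iic
  have hne : S.Nonempty := ⟨0, ⟨le_refl 0, ht₁⟩, h0⟩
  have hbdd : BddAbove S := ⟨t₁, fun x hx => hx.1.2⟩
  obtain ⟨⟨ht₀0, ht₀1⟩, ht₀le⟩ := hSc.csSup_mem hne hbdd
  have hlamle : lam (sSup S) ≤ a₀ := ht₀le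
  have ht₀lt : sSup S < t₁ := ht₀1.lt_of_ne fun h => (not_le.2 hgt) (h ▸ hlamle)
  have hanti : AntitoneOn lam (Set.Icc (sSup S) t₁) := by
    apply antitoneOn_of_deriv_nonpos (convex_Icc _ _)
      (hcont.mono fun x hx => le_trans ht₀0 hx.1)
    · intro x hx
      rw [interior_Icc] at hx
      have hx0 : (0:ℝ) < x := lt_of_le_of_lt ht₀0 hx.1
      exact (((hode x hx0.le).hasDerivAt (Ici_mem_nhds hx0)).differentiableAt).differentiableWithinAt
    · intro x hx
      rw [interior_Icc] at hx
      have hx0 : (0:ℝ) < x := lt_of_le_of_lt ht₀0 hx.1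
      rw [((hode x hx0.le).hasDerivAt (Ici_mem_nhds hx0)).deriv]
      have hlx : a₀ < lam x := by
        by_contra hle
        push_neg at hle
        exact absurd (le_csSup hbdd (⟨⟨hx0.le, hx.2.le⟩, hle⟩ : x ∈ S)) (not_le.2 hx.1)
      have hLpos := hpos x hx0.le
      have hL3 : (0:ℝ) < (lam x)^3 := by positivity
      have h1 : F₀ ≤ K₀ * (lam x)^3 := by
        nlinarith [pow_le_pow_left₀ ha₀.le hlx.le 3]
      have h2 : F₀ * ((lam x)^3)⁻¹ ≤ K₀ := by
        rw [← div_eq_mul_inv, div_le_iff₀ hL3]; exact h1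
      linarith
  have := hanti (Set.left_mem_Icc.2 ht₀lt.le) (Set.right_mem_Icc.2 ht₀lt.le) ht₀lt.le
  linarith

/-- Invariance from below: if `a₀ ≤ lam 0`, then `a₀ ≤ lam t` for all `t ≥ 0`. -/
private lemma stmt15_ge (K₀ F₀ a₀ : ℝ) (hK₀ : 0 < K₀) (ha₀ : 0 < a₀)
    (hF : F₀ = K₀ * a₀ ^ 3)
    (lam : ℝ → ℝ) (hpos : ∀ t ∈ Set.Ici (0:ℝ), 0 < lam t)
    (hode : ∀ t ∈ Set.Ici (0:ℝ),
      HasDerivWithinAt lam (-(2/3) * K₀ + (2/3) * F₀ * ((lam t)^3)⁻¹) (Set.Ici 0) t)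
    (h0 : a₀ ≤ lam 0) : ∀ t ∈ Set.Ici (0:ℝ), a₀ ≤ lam t := by
  have hcont : ContinuousOn lam (Set.Ici 0) := fun t ht => (hode t ht).continuousWithinAt
  intro t₁ ht₁
  by_contra hgt
  push_neg at hgt
  set S : Set ℝ := Set.Icc 0 t₁ ∩ lam ⁻¹' Set.Ici a₀ with hS
  have hSc : IsClosed S :=
    (hcont.mono Set.Icc_subset_Ici_self).preimage_isClosed_of_isClosed isClosed_Icc isClosed_Ici
  have hne : S.Nonempty := ⟨0, ⟨le_refl 0, ht₁⟩, h0⟩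
  have hbdd : BddAbove S := ⟨t₁, fun x hx => hx.1.2⟩
  obtain ⟨⟨ht₀0, ht₀1⟩, ht₀le⟩ := hSc.csSup_mem hne hbdd
  have hlamge : a₀ ≤ lam (sSup S) := ht₀le
  have ht₀lt : sSup S < t₁ := ht₀1.lt_of_ne fun h => (not_le.2 hgt) (h ▸ hlamge)
  have hmono : MonotoneOn lam (Set.Icc (sSup S) t₁) := by
    apply monotoneOn_of_deriv_nonneg (convex_Icc _ _)
      (hcont.mono fun x hx => le_trans ht₀0 hx.1)
    · intro x hx
      rw [interior_Icc] at hx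
      have hx0 : (0:ℝ) < x := lt_of_le_of_lt ht₀0 hx.1
      exact (((hode x hx0.le).hasDerivAt (Ici_mem_nhds hx0)).differentiableAt).differentiableWithinAt
    · intro x hx
      rw [interior_Icc] at hx
      have hx0 : (0:ℝ) < x := lt_of_le_of_lt ht₀0 hx.1
      rw [((hode x hx0.le).hasDerivAt (Ici_mem_nhds hx0)).deriv]
      have hlx : lam x < a₀ := by
        by_contra hle
        push_neg at hle
        exact absurd (le_csSup hbdd (⟨⟨hx0.le, hx.2.le⟩, hle⟩ : x ∈ S)) (not_le.2 hx.1)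
      have hLpos := hpos x hx0.le
      have hL3 : (0:ℝ) < (lam x)^3 := by positivity
      have h1 : K₀ * (lam x)^3 ≤ F₀ := by
        nlinarith [pow_le_pow_left₀ hLpos.le hlx.le 3]
      have h2 : K₀ ≤ F₀ * ((lam x)^3)⁻¹ := by
        rw [← div_eq_mul_inv, le_div_iff₀ hL3]; linarith
      linarith
  have := hmono (Set.left_mem_Icc.2 ht₀lt.le) (Set.right_mem_Icc.2 ht₀lt.le) ht₀lt.le
  linarith

set_option maxHeartbeats 1000000

/-- For `K₀ > 0`, `F₀ > 0` and `a₀ = (F₀/K₀)^{1/3}`, any positive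
solution of the reduced normalized ODE on `[0,∞)` with `λ(0) = 1` satisfies: if `a₀ > 1`
then `λ` is nondecreasing and `λ(t) < a₀` for all `t ≥ 0`; if `a₀ < 1` then `λ` is
nonincreasing and `λ(t) > a₀` for all `t ≥ 0`; and if `a₀ = 1` then `λ ≡ 1`. -/
theorem stmt_15 (K₀ F₀ : ℝ) (hK₀ : 0 < K₀) (hF₀ : 0 < F₀) (a₀ : ℝ)
    (ha₀ : a₀ = (F₀ / K₀) ^ ((1:ℝ)/3))
    (lam : ℝ → ℝ) (hpos : ∀ t ∈ Set.Ici (0:ℝ), 0 < lam t) (hl0 : lam 0 = 1)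
    (hode : ∀ t ∈ Set.Ici (0:ℝ),
      HasDerivWithinAt lam (-(2/3) * K₀ + (2/3) * F₀ * ((lam t)^3)⁻¹) (Set.Ici 0) t) :
    (1 < a₀ → MonotoneOn lam (Set.Ici 0) ∧ ∀ t ∈ Set.Ici (0:ℝ), lam t < a₀) ∧
    (a₀ < 1 → AntitoneOn lam (Set.Ici 0) ∧ ∀ t ∈ Set.Ici (0:ℝ), a₀ < lam t) ∧
    (a₀ = 1 → ∀ t ∈ Set.Ici (0:ℝ), lam t = 1) := by
  have hdiv : (0:ℝ) < F₀ / K₀ := div_pos hF₀ hK₀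
  have ha₀pos : 0 < a₀ := ha₀ ▸ Real.rpow_pos_of_pos hdiv _
  have ha3 : a₀ ^ 3 = F₀ / K₀ := by
    rw [ha₀, ← Real.rpow_natCast ((F₀/K₀) ^ ((1:ℝ)/3)) 3, ← Real.rpow_mul hdiv.le]
    norm_num
  have hF : F₀ = K₀ * a₀ ^ 3 := by rw [ha3]; field_simp
  have hcont : ContinuousOn lam (Set.Ici 0) := fun t ht => (hode t ht).continuousWithinAt
  have hD : ∀ x : ℝ, 0 < x →
      HasDerivAt lam (-(2/3) * K₀ + (2/3) * F₀ * ((lam x)^3)⁻¹) x :=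
    fun x hx => (hode x hx.le).hasDerivAt (Ici_mem_nhds hx)
  refine ⟨?_, ?_, ?_⟩
  · -- a₀ > 1
    intro ha1
    have hle : ∀ t ∈ Set.Ici (0:ℝ), lam t ≤ a₀ :=
      stmt15_le K₀ F₀ a₀ hK₀ ha₀pos hF lam hpos hode (by rw [hl0]; linarith)
    have hmono : MonotoneOn lam (Set.Ici 0) := by
      apply monotoneOn_of_deriv_nonneg (convex_Ici 0) hcont
      · intro x hx
        rw [interior_Ici] at hx
        exact (hD x hx).differentiableAt.differentiableWithinAt
      · intro x hx
        rw [interior_Ici] at hx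
        rw [(hD x hx).deriv]
        have hLpos := hpos x (show (0:ℝ) < x from hx).le
        have hL3 : (0:ℝ) < (lam x)^3 := by positivity
        have h1 : K₀ * (lam x)^3 ≤ F₀ := by
          nlinarith [pow_le_pow_left₀ hLpos.le (hle x (show (0:ℝ) < x from hx).le) 3]
        have h2 : K₀ ≤ F₀ * ((lam x)^3)⁻¹ := by
          rw [← div_eq_mul_inv, le_div_iff₀ hL3]; linarith
        linarith
    refine ⟨hmono, fun t ht => ?_⟩
    rcases lt_or_eq_of_le (hle t ht) with h | heq
    · exact h
    exfalso
    have ht0 : (0:ℝ) < t := by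
      rcases eq_or_lt_of_le (show (0:ℝ) ≤ t from ht) with h0 | h0
      · rw [← h0, hl0] at heq; linarith
      · exact h0
    set C : ℝ := 2 * K₀ * a₀ ^ 2 with hCdef
    have hCpos : 0 < C := by positivity
    set g : ℝ → ℝ := fun s => (a₀ - lam s) * Real.exp (C * s) with hgdef
    have hgd : ∀ x ∈ Set.Ioo (0:ℝ) t, HasDerivAt g
        ((0 - (-(2/3) * K₀ + (2/3) * F₀ * ((lam x)^3)⁻¹)) * Real.exp (C * x) +
          (a₀ - lam x) * (Real.exp (C * x) * C)) x := by
      intro x hx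
      have he : HasDerivAt (fun s : ℝ => Real.exp (C * s)) (Real.exp (C * x) * C) x := by
        simpa using ((hasDerivAt_id x).const_mul C).exp
      exact ((hasDerivAt_const x a₀).sub (hD x hx.1)).mul he
    have hgmono : MonotoneOn g (Set.Icc 0 t) := by
      apply monotoneOn_of_deriv_nonneg (convex_Icc _ _)
      · apply ContinuousOn.mul
        · exact continuousOn_const.sub (hcont.mono Set.Icc_subset_Ici_self)
        · exact (Real.continuous_exp.comp (continuous_const.mul continuous_id)).continuousOn
      · intro x hx
        rw [interior_Icc] at hx
        exact (hgd x hx).differentiableAt.differentiableWithinAt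
      · intro x hx
        rw [interior_Icc] at hx
        rw [(hgd x hx).deriv]
        have hE : (0:ℝ) < Real.exp (C * x) := Real.exp_pos _
        have hL1 : 1 ≤ lam x := by
          have := hmono (le_refl (0:ℝ)) hx.1.le hx.1.le
          rw [hl0] at this; exact this
        have hLa : lam x ≤ a₀ := hle x hx.1.le
        have hLpos := hpos x hx.1.le
        have hL3 : (0:ℝ) < (lam x)^3 := by positivity
        set L := lam x with hLdef
        have hL3ge1 : (1:ℝ) ≤ L^3 := by
          calc (1:ℝ) = 1^3 := by norm_num
            _ ≤ L^3 := pow_le_pow_left₀ (by norm_num) hL1 3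
        have hcube : a₀^3 - L^3 ≤ 3*a₀^2*(a₀ - L) := by
          nlinarith [mul_nonneg (mul_nonneg (sub_nonneg.2 hLa) (sub_nonneg.2 hLa))
            (by positivity : (0:ℝ) ≤ 2*a₀ + L)]
        have h9 : 0 ≤ (2/3)*K₀ - (2/3)*F₀*((L^3)⁻¹) + (a₀ - L)*C := by
          rw [← mul_le_mul_iff_of_pos_right hL3]
          have expand : ((2/3)*K₀ - (2/3)*F₀*((L^3)⁻¹) + (a₀ - L)*C) * L^3
              = (2/3)*K₀*L^3 - (2/3)*F₀ + (a₀ - L)*C*L^3 := by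
            field_simp
          rw [expand, zero_mul, hCdef, hF]
          nlinarith [mul_nonneg (mul_nonneg (mul_nonneg (by norm_num : (0:ℝ) ≤ 2) hK₀.le)
              (mul_nonneg (sq_nonneg a₀) (sub_nonneg.2 hLa))) (sub_nonneg.2 hL3ge1),
            mul_le_mul_of_nonneg_left hcube (by positivity : (0:ℝ) ≤ (2/3)*K₀)]
        have heq2 : (0 - (-(2/3) * K₀ + (2/3) * F₀ * ((L)^3)⁻¹)) * Real.exp (C * x) +
            (a₀ - L) * (Real.exp (C * x) * C) =
            ((2/3)*K₀ - (2/3)*F₀*((L^3)⁻¹) + (a₀ - L)*C) * Real.exp (C * x) := by ring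
        rw [heq2]
        exact mul_nonneg h9 hE.le
    have hfin : (a₀ - lam 0) * Real.exp (C * 0) ≤ (a₀ - lam t) * Real.exp (C * t) :=
      hgmono (Set.left_mem_Icc.2 ht0.le) (Set.right_mem_Icc.2 ht0.le) ht0.le
    rw [hl0, heq, sub_self, zero_mul, mul_zero, Real.exp_zero, mul_one] at hfin
    linarith
  · -- a₀ < 1
    intro ha1
    have hge : ∀ t ∈ Set.Ici (0:ℝ), a₀ ≤ lam t :=
      stmt15_ge K₀ F₀ a₀ hK₀ ha₀pos hF lam hpos hode (by rw [hl0]; linarith)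
    have hanti : AntitoneOn lam (Set.Ici 0) := by
      apply antitoneOn_of_deriv_nonpos (convex_Ici 0) hcont
      · intro x hx
        rw [interior_Ici] at hx
        exact (hD x hx).differentiableAt.differentiableWithinAt
      · intro x hx
        rw [interior_Ici] at hx
        rw [(hD x hx).deriv]
        have hLpos := hpos x (show (0:ℝ) < x from hx).le
        have hL3 : (0:ℝ) < (lam x)^3 := by positivity
        have h1 : F₀ ≤ K₀ * (lam x)^3 := by
          nlinarith [pow_le_pow_left₀ ha₀pos.le (hge x (show (0:ℝ) < x from hx).le) 3]
        have h2 : F₀ * ((lam x)^3)⁻¹ ≤ K₀ := by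
          rw [← div_eq_mul_inv, div_le_iff₀ hL3]; exact h1
        linarith
    refine ⟨hanti, fun t ht => ?_⟩
    rcases lt_or_eq_of_le (hge t ht) with h | heq
    · exact h
    exfalso
    have ht0 : (0:ℝ) < t := by
      rcases eq_or_lt_of_le (show (0:ℝ) ≤ t from ht) with h0 | h0
      · rw [← h0, hl0] at heq; linarith
      · exact h0
    set C : ℝ := 2 * K₀ / a₀ ^ 3 with hCdef
    have hCpos : 0 < C := by positivity
    have hC : C * a₀ ^ 3 = 2 * K₀ := by rw [hCdef]; field_simp
    set g : ℝ → ℝ := fun s => (lam s - a₀) * Real.exp (C * s) with hgdef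
    have hgd : ∀ x ∈ Set.Ioo (0:ℝ) t, HasDerivAt g
        ((-(2/3) * K₀ + (2/3) * F₀ * ((lam x)^3)⁻¹ - 0) * Real.exp (C * x) +
          (lam x - a₀) * (Real.exp (C * x) * C)) x := by
      intro x hx
      have he : HasDerivAt (fun s : ℝ => Real.exp (C * s)) (Real.exp (C * x) * C) x := by
        simpa using ((hasDerivAt_id x).const_mul C).exp
      exact ((hD x hx.1).sub (hasDerivAt_const x a₀)).mul he
    have hgmono : MonotoneOn g (Set.Icc 0 t) := by
      apply monotoneOn_of_deriv_nonneg (convex_Icc _ _)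
      · apply ContinuousOn.mul
        · exact (hcont.mono Set.Icc_subset_Ici_self).sub continuousOn_const
        · exact (Real.continuous_exp.comp (continuous_const.mul continuous_id)).continuousOn
      · intro x hx
        rw [interior_Icc] at hx
        exact (hgd x hx).differentiableAt.differentiableWithinAt
      · intro x hx
        rw [interior_Icc] at hx
        rw [(hgd x hx).deriv]
        have hE : (0:ℝ) < Real.exp (C * x) := Real.exp_pos _
        have hL1 : lam x ≤ 1 := by
          have := hanti (le_refl (0:ℝ)) hx.1.le hx.1.le
          rw [hl0] at this; exact this
        have hLa : a₀ ≤ lam x := hge x hx.1.le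
        have hLpos := hpos x hx.1.le
        have hL3 : (0:ℝ) < (lam x)^3 := by positivity
        set L := lam x with hLdef
        have ha3L : a₀^3 ≤ L^3 := pow_le_pow_left₀ ha₀pos.le hLa 3
        have hcube : L^3 - a₀^3 ≤ 3*(L - a₀) := by
          have hin : L^2 + a₀*L + a₀^2 ≤ 3 := by nlinarith
          nlinarith [mul_nonneg (sub_nonneg.2 hLa) (sub_nonneg.2 hin)]
        have h9 : 0 ≤ (-(2/3)*K₀ + (2/3)*F₀*((L^3)⁻¹)) + (L - a₀)*C := by
          rw [← mul_le_mul_iff_of_pos_right hL3]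
          have expand : ((-(2/3)*K₀ + (2/3)*F₀*((L^3)⁻¹)) + (L - a₀)*C) * L^3
              = -((2/3)*K₀*L^3) + (2/3)*F₀ + (L - a₀)*C*L^3 := by
            field_simp
          rw [expand, zero_mul, hF]
          have s2 : 2*K₀*(L - a₀) = C * a₀^3 * (L - a₀) := by rw [hC]
          nlinarith [mul_nonneg (mul_nonneg hCpos.le (sub_nonneg.2 ha3L))
              (sub_nonneg.2 hLa),
            mul_le_mul_of_nonneg_left hcube (by positivity : (0:ℝ) ≤ (2/3)*K₀), s2]
        have heq2 : (-(2/3) * K₀ + (2/3) * F₀ * ((L)^3)⁻¹ - 0) * Real.exp (C * x) +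
            (L - a₀) * (Real.exp (C * x) * C) =
            ((-(2/3)*K₀ + (2/3)*F₀*((L^3)⁻¹)) + (L - a₀)*C) * Real.exp (C * x) := by ring
        rw [heq2]
        exact mul_nonneg h9 hE.le
    have hfin : (lam 0 - a₀) * Real.exp (C * 0) ≤ (lam t - a₀) * Real.exp (C * t) :=
      hgmono (Set.left_mem_Icc.2 ht0.le) (Set.right_mem_Icc.2 ht0.le) ht0.le
    rw [hl0, ← heq, sub_self, zero_mul, mul_zero, Real.exp_zero, mul_one] at hfin
    linarith
  · -- a₀ = 1
    intro ha1 t ht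
    have hle := stmt15_le K₀ F₀ a₀ hK₀ ha₀pos hF lam hpos hode (by rw [hl0, ha1]) t ht
    have hge := stmt15_ge K₀ F₀ a₀ hK₀ ha₀pos hF lam hpos hode (by rw [hl0, ha1]) t ht
    rw [ha1] at hle hge
    linarith
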